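/- Let K ≥ 1 be an integer, r > 0 and σ² > 0 real, p₁,…,p_K ≥ 0 real, and let k ∈ {1,…,K} be such that p̂_t := p_t − r·Σ_{i=t+1}^K p_i > 0 for every t = 1,…,k. Then for every real x > 0 the following equivalence holds: [ x·p_t / ( x·Σ_{i=t+1}^K p_i + σ² ) ≥ r for all t = 1,…,k ] if and only if [ x ≥ r·σ²·max_{1≤t≤k} (1/p̂_t) ]. Consequently, for a channel gain x·d^{−τ} with x exponentially distributed of rate 1, the success probability of client m(k) decoding all messages of indices t ≤ k equals exp(−d^τ·r·σ²·max_{1≤t≤k} 1/p̂_t). -/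

import Mathlib

open MeasureTheory

/-- with p̂ₜ = pₜ − r·∑_{i>t} pᵢ > 0 for all t ≤ k, for every x > 0:
[x·pₜ/(x·∑_{i>t} pᵢ + σ²) ≥ r for all t ≤ k] iff [x ≥ r·σ²·max_{t≤k} 1/p̂ₜ].
Consequently, for a channel gain X·d^{−τ} with X exponential of rate 1, the
success probability of client m(k) decoding all messages of indices t ≤ k equals
exp(−d^τ·r·σ²·max_{t≤k} 1/p̂ₜ). -/
theorem stmt17 {Ω : Type*} [MeasurableSpace Ω] (μ : Measure Ω) [IsProbabilityMeasure μ]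
    (X : Ω → ℝ) (hXm : Measurable X)
    (hlaw : ∀ x : ℝ, 0 ≤ x → μ {ω | x < X ω} = ENNReal.ofReal (Real.exp (-x)))
    (K : ℕ) (hK : 1 ≤ K) (r σ2 : ℝ) (hr : 0 < r) (hσ2 : 0 < σ2)
    (p : Fin K → ℝ) (hp : ∀ t, 0 ≤ p t) (k : Fin K)
    (phat : Fin K → ℝ)
    (hphatdef : ∀ t, phat t = p t - r * ∑ i ∈ Finset.Ioi t, p i)
    (hphat : ∀ t ≤ k, 0 < phat t)
    (d τ : ℝ) (hd : 0 < d) :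
    (∀ x : ℝ, 0 < x →
      ((∀ t ≤ k, r ≤ x * p t / (x * ∑ i ∈ Finset.Ioi t, p i + σ2)) ↔
        r * σ2 * (Finset.Iic k).sup' ⟨k, Finset.mem_Iic.mpr le_rfl⟩
          (fun t => 1 / phat t) ≤ x)) ∧
    μ {ω | ∀ t ≤ k, r ≤ (X ω * d ^ (-τ)) * p t /
        ((X ω * d ^ (-τ)) * ∑ i ∈ Finset.Ioi t, p i + σ2)} =
      ENNReal.ofReal (Real.exp (-(d ^ τ * r * σ2 *
        (Finset.Iic k).sup' ⟨k, Finset.mem_Iic.mpr le_rfl⟩ (fun t => 1 / phat t)))) := by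
  have hd' : 0 < d ^ τ := Real.rpow_pos_of_pos hd τ
  have hd'' : 0 < d ^ (-τ) := Real.rpow_pos_of_pos hd (-τ)
  set M := (Finset.Iic k).sup' ⟨k, Finset.mem_Iic.mpr le_rfl⟩ (fun t => 1 / phat t) with hM
  have hMpos : 0 < M :=
    lt_of_lt_of_le (one_div_pos.mpr (hphat k le_rfl))
      (Finset.le_sup' (fun t => 1 / phat t) (Finset.mem_Iic.mpr le_rfl))
  have hrσ : 0 < r * σ2 := mul_pos hr hσ2
  have key : ∀ x : ℝ, 0 < x →
      ((∀ t ≤ k, r ≤ x * p t / (x * ∑ i ∈ Finset.Ioi t, p i + σ2)) ↔ r * σ2 * M ≤ x) := by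
    intro x hx
    have step : ∀ t, t ≤ k →
        (r ≤ x * p t / (x * ∑ i ∈ Finset.Ioi t, p i + σ2) ↔ r * σ2 * (1 / phat t) ≤ x) := by
      intro t ht
      have hS : 0 ≤ ∑ i ∈ Finset.Ioi t, p i := Finset.sum_nonneg fun i _ => hp i
      have hD : 0 < x * ∑ i ∈ Finset.Ioi t, p i + σ2 := by positivity
      have hph := hphat t ht
      rw [le_div_iff₀ hD, mul_one_div, div_le_iff₀ hph, hphatdef t]
      constructor <;> intro h <;> nlinarith
    have h2 : (r * σ2 * M ≤ x) ↔ ∀ t ∈ Finset.Iic k, r * σ2 * (1 / phat t) ≤ x := by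
      constructor
      · intro h t ht
        have h1 : 1 / phat t ≤ M := Finset.le_sup' (fun t => 1 / phat t) ht
        nlinarith [mul_le_mul_of_nonneg_left h1 hrσ.le]
      · intro h
        rw [mul_comm, ← le_div_iff₀ hrσ, hM]
        apply Finset.sup'_le
        intro t ht
        rw [le_div_iff₀ hrσ]
        nlinarith [h t ht]
    rw [h2]
    constructor
    · intro h t ht
      exact (step t (Finset.mem_Iic.mp ht)).mp (h t (Finset.mem_Iic.mp ht))
    · intro h t ht
      exact (step t ht).mpr (h t (Finset.mem_Iic.mpr ht))
  refine ⟨key, ?_⟩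
  have hcdf : ∀ c : ℝ, 0 < c → μ {ω | c ≤ X ω} = ENNReal.ofReal (Real.exp (-c)) := by
    intro c hc
    refine le_antisymm ?_ ?_
    · refine ENNReal.le_of_forall_pos_le_add fun ε hε _ => ?_
      have hεe : (0:ℝ) < (ε : ℝ) * Real.exp c := mul_pos hε (Real.exp_pos c)
      set δ : ℝ := min (c/2) (Real.log (1 + (ε : ℝ) * Real.exp c)) with hδdef
      have hδpos : 0 < δ := lt_min (by linarith) (Real.log_pos (by linarith))
      have hδle : δ ≤ c/2 := min_le_left _ _
      have hsub : {ω | c ≤ X ω} ⊆ {ω | c - δ < X ω} := by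
        intro ω hω
        simp only [Set.mem_setOf_eq] at hω ⊢
        linarith
      have hexp1 : Real.exp (-c) * Real.exp c = 1 := by rw [← Real.exp_add]; simp
      calc μ {ω | c ≤ X ω} ≤ μ {ω | c - δ < X ω} := measure_mono hsub
        _ = ENNReal.ofReal (Real.exp (-(c - δ))) := hlaw _ (by linarith)
        _ ≤ ENNReal.ofReal (Real.exp (-c) + ε) := by
            apply ENNReal.ofReal_le_ofReal
            have he : Real.exp (-(c - δ)) = Real.exp (-c) * Real.exp δ := by
              rw [← Real.exp_add]; ring_nf
            rw [he]
            have h3 : Real.exp δ ≤ 1 + (ε : ℝ) * Real.exp c := by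
              calc Real.exp δ ≤ Real.exp (Real.log (1 + (ε : ℝ) * Real.exp c)) :=
                    Real.exp_le_exp.mpr (min_le_right _ _)
                _ = 1 + (ε : ℝ) * Real.exp c := Real.exp_log (by linarith)
            calc Real.exp (-c) * Real.exp δ
                ≤ Real.exp (-c) * (1 + (ε : ℝ) * Real.exp c) :=
                  mul_le_mul_of_nonneg_left h3 (Real.exp_pos (-c)).le
              _ = Real.exp (-c) + (ε : ℝ) * (Real.exp (-c) * Real.exp c) := by ring
              _ = Real.exp (-c) + ε := by rw [hexp1, mul_one]
        _ = ENNReal.ofReal (Real.exp (-c)) + ε := by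
            rw [ENNReal.ofReal_add (Real.exp_pos _).le ε.coe_nonneg, ENNReal.ofReal_coe_nnreal]
    · calc ENNReal.ofReal (Real.exp (-c)) = μ {ω | c < X ω} := (hlaw c hc.le).symm
        _ ≤ μ {ω | c ≤ X ω} := by
            apply measure_mono
            intro ω h
            exact le_of_lt (show c < X ω from h)
  have hae : ∀ᵐ ω ∂μ, 0 < X ω := by
    have h1 : μ {ω | 0 < X ω} = 1 := by
      rw [hlaw 0 le_rfl]; simp
    have hmeas : MeasurableSet {ω | 0 < X ω} := hXm measurableSet_Ioi
    rw [ae_iff]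
    have hset : {ω | ¬ 0 < X ω} = {ω | 0 < X ω}ᶜ := by ext ω; simp
    rw [hset, measure_compl hmeas (measure_ne_top μ _), h1, measure_univ]
    simp
  have hcpos : 0 < d ^ τ * r * σ2 * M := by positivity
  have heq : {ω | ∀ t ≤ k, r ≤ (X ω * d ^ (-τ)) * p t /
        ((X ω * d ^ (-τ)) * ∑ i ∈ Finset.Ioi t, p i + σ2)}
      =ᵐ[μ] {ω | d ^ τ * r * σ2 * M ≤ X ω} := by
    filter_upwards [hae] with ω hω
    have hx : 0 < X ω * d ^ (-τ) := mul_pos hω hd''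
    have h1 := key _ hx
    have h2 : r * σ2 * M ≤ X ω * d ^ (-τ) ↔ d ^ τ * r * σ2 * M ≤ X ω := by
      rw [Real.rpow_neg hd.le, ← div_eq_mul_inv, le_div_iff₀ hd']
      constructor <;> intro h <;> nlinarith [hd']
    exact eq_iff_iff.mpr (h1.trans h2)
  rw [measure_congr heq, hcdf _ hcpos]
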